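/- arXiv:2510.03499 — 3 statements merged into one kernel-verified Lean document; each statement's English description precedes it below -/
import Mathlib

section
/- Let G be a banana tree and let D and D' be effective divisors on G. Then D is linearly equivalent to D' if and only if D can be transformed into D' by a finite sequence of legal adjacency moves. -/
open Finset

attribute [local instance] Classical.propDecidable

noncomputable section

/-- A finite loopless multigraph on vertex type `V`, given by a symmetric
edge-multiplicity function: `mul u v` is the number of edges joining `u` and `v`. -/
structure Multigraph (V : Type) [Fintype V] where
  mul : V → V → ℕ
  symm : ∀ u v, mul u v = mul v u
  loopless : ∀ v, mul v v = 0

namespace Multigraph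

variable {V : Type} [Fintype V]

/-- The underlying simple graph of a multigraph. -/
def underlying (G : Multigraph V) : SimpleGraph V where
  Adj u v := 0 < G.mul u v
  symm := by
    constructor
    intro u v h
    rwa [G.symm] at h
  loopless := by
    constructor
    intro v h
    simp [G.loopless] at h

/-- A multigraph is connected if its underlying simple graph is. -/
def Connected (G : Multigraph V) : Prop := G.underlying.Connected

/-- A banana tree is a multigraph whose underlying simple graph is a tree. -/
def IsBananaTree (G : Multigraph V) : Prop := G.underlying.IsTree

/-- The valence (degree) of a vertex. -/
def valence (G : Multigraph V) (v : V) : ℕ := ∑ w, G.mul v w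

/-- The number of edges of a multigraph. -/
def edgeCount (G : Multigraph V) : ℕ := (∑ u, ∑ v, G.mul u v) / 2

/-- The genus (first Betti number) `|E| - |V| + 1` of a connected multigraph. -/
def genus (G : Multigraph V) : ℕ := G.edgeCount + 1 - Fintype.card V

/-- The degree of a divisor: the total number of chips. -/
def degree (D : V → ℤ) : ℤ := ∑ v, D v

/-- A divisor is effective if it is nonnegative everywhere. -/
def Effective (D : V → ℤ) : Prop := ∀ v, 0 ≤ D v

/-- Linear equivalence of divisors: `D'` is obtained from `D` by a finite sequence of
chip-firing moves, equivalently (for connected graphs) via an integral firing script `σ`. -/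
def LinEquiv (G : Multigraph V) (D D' : V → ℤ) : Prop :=
  ∃ σ : V → ℤ, ∀ v, D' v = D v + ∑ w, (G.mul v w : ℤ) * (σ w - σ v)

/-- A divisor has positive rank if for every vertex `v` it is linearly equivalent to an
effective divisor placing at least one chip on `v`. -/
def PosRank (G : Multigraph V) (D : V → ℤ) : Prop :=
  ∀ v, ∃ D', G.LinEquiv D D' ∧ Effective D' ∧ 1 ≤ D' v

/-- The (divisorial) gonality: the minimum degree of a positive-rank effective divisor. -/
def gonality (G : Multigraph V) : ℕ :=
  sInf {d : ℕ | ∃ D : V → ℤ, Effective D ∧ G.PosRank D ∧ degree D = (d : ℤ)}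

/-- `f(G, v, k)`: the minimum degree of an effective divisor `D` on `G` such that
`D + k·v` has positive rank. -/
def fmin (G : Multigraph V) (v : V) (k : ℕ) : ℕ :=
  sInf {d : ℕ | ∃ D : V → ℤ, Effective D ∧
    G.PosRank (fun u => D u + if u = v then (k : ℤ) else 0) ∧ degree D = (d : ℤ)}

/-- Delete a vertex from a multigraph. -/
def deleteVertex (G : Multigraph V) (v : V) : Multigraph {u : V // u ≠ v} where
  mul a b := G.mul a.1 b.1
  symm := fun a b => G.symm a.1 b.1
  loopless := fun a => G.loopless a.1

/-- Delete one single edge between `u` and `w` (if any) from a multigraph. -/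
def deleteOneEdge (G : Multigraph V) (u w : V) : Multigraph V where
  mul x y := if (x = u ∧ y = w) ∨ (x = w ∧ y = u) then G.mul x y - 1 else G.mul x y
  symm := by
    intro x y
    by_cases h : (x = u ∧ y = w) ∨ (x = w ∧ y = u)
    · have h' : (y = u ∧ x = w) ∨ (y = w ∧ x = u) := by tauto
      simp [h, h', G.symm x y]
    · have h' : ¬((y = u ∧ x = w) ∨ (y = w ∧ x = u)) := by tauto
      simp [h, h', G.symm x y]
  loopless := by
    intro v
    by_cases h : (v = u ∧ v = w) ∨ (v = w ∧ v = u)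
    · simp [h, G.loopless]
    · simp [h, G.loopless]

/-- The adjacency move from `v` to `w` on a banana tree: the subset-firing move at the
connected component of `v` after removing the `v`-`w` edge bunch.  Its net effect is to
move `|E(v,w)|` chips from `v` to `w`. -/
def adjMove (G : Multigraph V) (v w : V) (D : V → ℤ) : V → ℤ :=
  fun u => if u = v then D u - (G.mul v w : ℤ)
    else if u = w then D u + (G.mul v w : ℤ) else D u

/-- A single legal adjacency move: both divisors are effective and the second is
obtained from the first by an adjacency move between adjacent vertices. -/
def LegalAdjStep (G : Multigraph V) (D D' : V → ℤ) : Prop :=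
  ∃ v w, G.underlying.Adj v w ∧ Effective D ∧ Effective D' ∧ D' = G.adjMove v w D

/-- A scramble: a collection of nonempty vertex sets (eggs), each inducing a connected
subgraph. -/
def IsScramble (G : Multigraph V) (S : Finset (Finset V)) : Prop :=
  ∀ X ∈ S, X.Nonempty ∧ (G.underlying.induce (X : Set V)).Connected

/-- A hitting set of a scramble: a set of vertices meeting every egg. -/
def IsHittingSet (S : Finset (Finset V)) (T : Finset V) : Prop :=
  ∀ X ∈ S, (X ∩ T).Nonempty

/-- The hitting number of a scramble. -/
def hittingNumber (S : Finset (Finset V)) : ℕ∞ :=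
  sInf {t : ℕ∞ | ∃ T : Finset V, IsHittingSet S T ∧ (T.card : ℕ∞) = t}

/-- The simple graph remaining after removing `c u w` of the edges of each bunch. -/
def cutGraph (G : Multigraph V) (c : V → V → ℕ) : SimpleGraph V where
  Adj u w := u ≠ w ∧ c u w < G.mul u w ∧ c w u < G.mul w u
  symm := ⟨fun u w h => ⟨h.1.symm, h.2.2, h.2.1⟩⟩
  loopless := ⟨fun u h => h.1 rfl⟩

/-- `c` describes an egg-cut of the scramble `S`: a set of edges of `G` (given by the
number `c u w` of edges removed from each bunch) whose removal leaves at least two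
connected components each completely containing an egg. -/
def IsEggCut (G : Multigraph V) (S : Finset (Finset V)) (c : V → V → ℕ) : Prop :=
  (∀ u w, c u w = c w u) ∧ (∀ u w, c u w ≤ G.mul u w) ∧
  ∃ X₁ ∈ S, ∃ X₂ ∈ S,
    (∀ x ∈ X₁, ∀ y ∈ X₁, (G.cutGraph c).Reachable x y) ∧
    (∀ x ∈ X₂, ∀ y ∈ X₂, (G.cutGraph c).Reachable x y) ∧
    (∀ x ∈ X₁, ∀ y ∈ X₂, ¬ (G.cutGraph c).Reachable x y)

/-- The egg-cut number of a scramble (`⊤` if no egg-cut exists). -/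
def eggCutNumber (G : Multigraph V) (S : Finset (Finset V)) : ℕ∞ :=
  sInf {t : ℕ∞ | ∃ c : V → V → ℕ, G.IsEggCut S c ∧
    ((∑ u, ∑ w, c u w : ℕ) : ℕ∞) = 2 * t}

/-- The order of a scramble: the minimum of its hitting number and egg-cut number. -/
def scrambleOrder (G : Multigraph V) (S : Finset (Finset V)) : ℕ∞ :=
  min (hittingNumber S) (G.eggCutNumber S)

/-- The scramble number of a multigraph: the maximum order of a scramble on it. -/
def scrambleNumber (G : Multigraph V) : ℕ∞ :=
  sSup {m : ℕ∞ | ∃ S : Finset (Finset V), G.IsScramble S ∧ G.scrambleOrder S = m}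

/-- The weight of a node `t` in a tree-cut decomposition `(T, X)`: the number of vertices
mapped to `t` plus the number of edges routed through `t` with neither endpoint mapped
to `t`. -/
def nodeWeight (G : Multigraph V) {N : Type} [Fintype N] (T : SimpleGraph N)
    (X : V → N) (t : N) : ℕ :=
  (Finset.univ.filter fun v => X v = t).card +
    (∑ u, ∑ w, if X u ≠ t ∧ X w ≠ t ∧
        ¬ (T.deleteEdges {e | t ∈ e}).Reachable (X u) (X w)
      then G.mul u w else 0) / 2

/-- The weight of a link `pq` in a tree-cut decomposition `(T, X)`: the number of edges
of `G` routed through that link. -/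
def linkWeight (G : Multigraph V) {N : Type} (T : SimpleGraph N)
    (X : V → N) (p q : N) : ℕ :=
  (∑ u, ∑ w, if ¬ (T.deleteEdges {s(p, q)}).Reachable (X u) (X w)
    then G.mul u w else 0) / 2

/-- The width of a tree-cut decomposition `(T, X)`: the maximum of all node and link
weights. -/
def tcdWidth (G : Multigraph V) {N : Type} [Fintype N] (T : SimpleGraph N)
    (X : V → N) : ℕ :=
  max (Finset.univ.sup fun t => G.nodeWeight T X t)
      (Finset.univ.sup fun p : N × N =>
        if T.Adj p.1 p.2 then G.linkWeight T X p.1 p.2 else 0)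

/-- The screewidth of a multigraph: the minimum width of a tree-cut decomposition. -/
def screewidth (G : Multigraph V) : ℕ :=
  sInf {w : ℕ | ∃ (m : ℕ) (T : SimpleGraph (Fin m)), T.IsTree ∧
    ∃ X : V → Fin m, G.tcdWidth T X = w}

/-- The banana path on `n+1` vertices `v_0, …, v_n`, with `a i` edges joining
`v_i` and `v_{i+1}` (for `0 ≤ i < n`). -/
def bananaPath (n : ℕ) (a : ℕ → ℕ) : Multigraph (Fin (n + 1)) where
  mul i j := if i.val + 1 = j.val then a i.val else if j.val + 1 = i.val then a j.val else 0
  symm := by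
    intro u v
    split_ifs <;> first | rfl | (exfalso; omega)
  loopless := by
    intro v
    have h : ¬ (v.val + 1 = v.val) := by omega
    simp [h]

/-- The banana star with central vertex `Sum.inl ()` and, for each `i : Fin k`,
`r i` leaves joined to the center by `a i` parallel edges. -/
def bananaStar (k : ℕ) (a r : Fin k → ℕ) :
    Multigraph (Unit ⊕ (Σ i : Fin k, Fin (r i))) where
  mul x y :=
    match x, y with
    | Sum.inl _, Sum.inr ⟨i, _⟩ => a i
    | Sum.inr ⟨i, _⟩, Sum.inl _ => a i
    | _, _ => 0
  symm := by
    intro u v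
    rcases u with u | ⟨i, li⟩ <;> rcases v with v | ⟨j, lj⟩ <;> rfl
  loopless := by
    intro v
    rcases v with v | ⟨i, li⟩ <;> rfl

end Multigraph

open Multigraph

namespace BTAux
variable {V : Type} [Fintype V]

/-- net effect of one adjacency move across bunch `p`. -/
def eff (G : Multigraph V) (p : V × V) (u : V) : ℤ :=
  (if u = p.2 then (G.mul p.1 p.2 : ℤ) else 0) - (if u = p.1 then (G.mul p.1 p.2 : ℤ) else 0)

lemma legal_of_fire_set (G : Multigraph V) (A : Set V) (D E : V → ℤ)
    (hD : Effective D) (hE : Effective E)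
    (hEq : ∀ u, E u = D u + ∑ w, (G.mul u w : ℤ) *
      ((if w ∈ A then 1 else 0) - (if u ∈ A then 1 else 0))) :
    Relation.ReflTransGen G.LegalAdjStep D E := by
  classical
  set cross : Finset (V × V) := Finset.univ.filter (fun p => p.1 ∈ A ∧ p.2 ∉ A) with hcross
  set DP : Finset (V × V) → V → ℤ := fun P u => D u + ∑ p ∈ P, eff G p u with hDP
  have key : ∀ u, ∑ p ∈ cross, eff G p u
      = ∑ w, (G.mul u w : ℤ) * ((if w ∈ A then 1 else 0) - (if u ∈ A then 1 else 0)) := by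
    intro u
    rw [hcross, Finset.sum_filter, Fintype.sum_prod_type]
    by_cases hu : u ∈ A
    · have h1 : ∀ v : V, (∑ w, if v ∈ A ∧ w ∉ A then eff G (v, w) u else 0)
          = if v = u then (∑ w, if w ∉ A then -(G.mul u w : ℤ) else 0) else 0 := by
        intro v
        by_cases hv : v = u
        · subst hv
          simp only [if_pos rfl]
          refine Finset.sum_congr rfl fun w _ => ?_
          by_cases hw : w ∈ A
          · simp [hu, hw]
          · have hvw : v ≠ w := fun h => hw (h ▸ hu)
            simp [eff, hu, hw, hvw]
        · simp only [if_neg hv]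
          apply Finset.sum_eq_zero
          intro w _
          by_cases hvA : v ∈ A
          · by_cases hw : w ∈ A
            · simp [hw]
            · have huw : u ≠ w := fun h => hw (h ▸ hu)
              have huv : u ≠ v := fun h => hv (h.symm)
              simp [eff, hvA, hw, huw, huv]
          · simp [hvA]
      rw [Finset.sum_congr rfl fun v _ => h1 v, Finset.sum_ite_eq' Finset.univ u _]
      simp only [Finset.mem_univ, if_pos]
      refine Finset.sum_congr rfl fun w _ => ?_
      by_cases hw : w ∈ A <;> simp [hu, hw] <;> ring
    · have h1 : ∀ v : V, (∑ w, if v ∈ A ∧ w ∉ A then eff G (v, w) u else 0)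
          = if v ∈ A then (G.mul v u : ℤ) else 0 := by
        intro v
        by_cases hvA : v ∈ A
        · simp only [if_pos hvA]
          have huv : u ≠ v := fun h => hu (h ▸ hvA)
          have h2 : ∀ w : V, (if v ∈ A ∧ w ∉ A then eff G (v, w) u else 0)
              = if w = u then (G.mul v u : ℤ) else 0 := by
            intro w
            by_cases hw : w = u
            · subst hw; simp [eff, hvA, hu, huv]
            · by_cases hwA : w ∈ A
              · simp [hwA, hw]
              · have huw : u ≠ w := fun h => hw h.symm
                simp [eff, hvA, hwA, huw, huv, hw]
          rw [Finset.sum_congr rfl fun w _ => h2 w, Finset.sum_ite_eq' Finset.univ u _]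
          simp
        · simp [hvA]
      rw [Finset.sum_congr rfl fun v _ => h1 v]
      simp only [hu, if_neg, ite_false]
      rw [show (∑ w, (G.mul u w : ℤ) * ((if w ∈ A then 1 else 0) - 0))
          = ∑ w, (if w ∈ A then (G.mul w u : ℤ) else 0) from
        Finset.sum_congr rfl fun w _ => by by_cases hw : w ∈ A <;> simp [hw, G.symm u w]]
  have hDPcross : ∀ u, DP cross u = E u := by
    intro u; rw [hDP]; dsimp only; rw [key u, ← hEq u]
  -- effectiveness of all intermediate divisors
  have heffP : ∀ P : Finset (V × V), P ⊆ cross → Effective (DP P) := by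
    intro P hP u
    by_cases hu : u ∈ A
    · have h1 : ∀ p ∈ cross, p ∉ P → eff G p u ≤ 0 := by
        intro p hp _
        rw [hcross, Finset.mem_filter] at hp
        have h2 : u ≠ p.2 := fun h => hp.2.2 (h ▸ hu)
        simp only [eff, if_neg h2]
        split_ifs <;> simp
      have h3 : ∑ p ∈ cross, eff G p u ≤ ∑ p ∈ P, eff G p u := by
        have h3' : ∑ p ∈ P, (- eff G p u) ≤ ∑ p ∈ cross, (- eff G p u) :=
          Finset.sum_le_sum_of_subset_of_nonneg hP
            (fun p hp hnp => by have := h1 p hp hnp; omega)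
        rw [Finset.sum_neg_distrib, Finset.sum_neg_distrib] at h3'
        omega
      have h4 : DP cross u ≤ DP P u := by rw [hDP]; dsimp only; omega
      have := hE u
      rw [← hDPcross u] at this
      omega
    · have h1 : ∀ p ∈ P, 0 ≤ eff G p u := by
        intro p hp
        have hp' := hP hp
        rw [hcross, Finset.mem_filter] at hp'
        have h2 : u ≠ p.1 := fun h => hu (h ▸ hp'.2.1)
        simp only [eff, if_neg h2]
        split_ifs <;> simp
      have h3 : 0 ≤ ∑ p ∈ P, eff G p u := Finset.sum_nonneg h1
      have := hD u
      rw [hDP]; dsimp only; omega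
  -- induction over subsets of cross
  have main : ∀ P : Finset (V × V), P ⊆ cross → Relation.ReflTransGen G.LegalAdjStep D (DP P) := by
    intro P
    induction P using Finset.induction_on with
    | empty =>
        intro _
        have : DP ∅ = D := by funext u; simp [hDP]
        rw [this]
    | @insert p P hp ih =>
        intro hsub
        have hPsub : P ⊆ cross := fun q hq => hsub (Finset.mem_insert_of_mem hq)
        have hpc : p ∈ cross := hsub (Finset.mem_insert_self p P)
        have hchain := ih hPsub
        by_cases hm : G.mul p.1 p.2 = 0
        · have : DP (insert p P) = DP P := by
            funext u; rw [hDP]; dsimp only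
            rw [Finset.sum_insert hp]
            simp [eff, hm]
          rw [this]; exact hchain
        · rw [hcross, Finset.mem_filter] at hpc
          have hne : p.1 ≠ p.2 := fun h => hpc.2.2 (h ▸ hpc.2.1)
          have heq : DP (insert p P) = G.adjMove p.1 p.2 (DP P) := by
            funext u
            rw [hDP]; dsimp only
            rw [Finset.sum_insert hp]
            simp only [Multigraph.adjMove, eff]
            by_cases h1 : u = p.1
            · have h2 : u ≠ p.2 := fun h => hne (h1.symm.trans h)
              simp only [if_pos h1, if_neg h2]; ring
            · by_cases h2 : u = p.2
              · simp only [if_neg h1, if_pos h2]; ring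
              · simp only [if_neg h1, if_neg h2]; ring
          exact hchain.tail
            ⟨p.1, p.2, Nat.pos_of_ne_zero hm, heffP P hPsub, heffP _ hsub, heq⟩
  have := main cross (le_refl cross)
  have hEeq : DP cross = E := funext hDPcross
  rwa [hEeq] at this

lemma legal_of_nonneg_script (G : Multigraph V) [Nonempty V] :
    ∀ n : ℕ, ∀ σ : V → ℤ, (∀ v, 0 ≤ σ v) → (∑ v, σ v).toNat ≤ n →
    ∀ D D' : V → ℤ, Effective D → Effective D' →
    (∀ v, D' v = D v + ∑ w, (G.mul v w : ℤ) * (σ w - σ v)) →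
    Relation.ReflTransGen G.LegalAdjStep D D' := by
  intro n
  induction n with
  | zero =>
      intro σ hσ hsum D D' hD hD' hEq
      have hz : ∀ v, σ v = 0 := by
        intro v
        have h1 : ∑ v, σ v ≤ 0 := by omega
        have h2 : ∀ v ∈ Finset.univ, 0 ≤ σ v := fun v _ => hσ v
        have h3 : σ v ≤ ∑ v, σ v := Finset.single_le_sum h2 (Finset.mem_univ v)
        have := hσ v; omega
      have : D' = D := by
        funext v
        rw [hEq v]
        have : ∀ w, (G.mul v w : ℤ) * (σ w - σ v) = 0 := by
          intro w; rw [hz w, hz v]; ring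
        rw [Finset.sum_congr rfl fun w _ => this w]
        simp
      rw [this]
  | succ n ih =>
      intro σ hσ hsum D D' hD hD' hEq
      set M : ℤ := Finset.univ.sup' Finset.univ_nonempty σ with hM
      by_cases hM0 : M ≤ 0
      · -- σ is identically zero
        have hz : ∀ v, σ v = 0 := by
          intro v
          have h1 : σ v ≤ M := Finset.le_sup' σ (Finset.mem_univ v)
          have := hσ v; omega
        have : D' = D := by
          funext v
          rw [hEq v]
          have : ∀ w, (G.mul v w : ℤ) * (σ w - σ v) = 0 := by
            intro w; rw [hz w, hz v]; ring
          rw [Finset.sum_congr rfl fun w _ => this w]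
          simp
        rw [this]
      · push_neg at hM0
        obtain ⟨v₀, _, hv₀⟩ := Finset.exists_mem_eq_sup' Finset.univ_nonempty σ
        set A : Set V := {v | σ v = M} with hA
        set E : V → ℤ := fun u => D u + ∑ w, (G.mul u w : ℤ) *
          ((if w ∈ A then 1 else 0) - (if u ∈ A then 1 else 0)) with hE
        have hle : ∀ v, σ v ≤ M := fun v => Finset.le_sup' σ (Finset.mem_univ v)
        have hEeff : Effective E := by
          intro u
          by_cases hu : u ∈ A
          · have hterm : ∀ w, (G.mul u w : ℤ) * (σ w - σ u)
                ≤ (G.mul u w : ℤ) * ((if w ∈ A then 1 else 0) - (if u ∈ A then 1 else 0)) := by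
              intro w
              have hmn : (0:ℤ) ≤ (G.mul u w : ℤ) := Int.natCast_nonneg _
              have huM : σ u = M := hu
              by_cases hw : w ∈ A
              · have hwM : σ w = M := hw
                simp only [if_pos hw, if_pos hu]
                rw [huM, hwM]; nlinarith
              · have hwM : σ w ≠ M := hw
                have hwle : σ w ≤ M - 1 := by have := hle w; omega
                have h1 : σ w - σ u ≤ -1 := by omega
                simp only [if_neg hw, if_pos hu]
                nlinarith
            have h2 : D' u ≤ E u := by
              have hs := Finset.sum_le_sum (fun w (_ : w ∈ Finset.univ) => hterm w)
              rw [hEq u, hE]; dsimp only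
              omega
            have := hD' u; omega
          · have hterm : ∀ w, (0:ℤ) ≤ (G.mul u w : ℤ) *
                ((if w ∈ A then 1 else 0) - (if u ∈ A then 1 else 0)) := by
              intro w
              have hmn : (0:ℤ) ≤ (G.mul u w : ℤ) := Int.natCast_nonneg _
              simp only [if_neg hu]
              by_cases hw : w ∈ A <;> simp [hw] <;> positivity
            have h2 : (0:ℤ) ≤ ∑ w, (G.mul u w : ℤ) *
                ((if w ∈ A then 1 else 0) - (if u ∈ A then 1 else 0)) :=
              Finset.sum_nonneg (fun w _ => hterm w)
            have := hD u
            rw [hE]; dsimp only; omega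
        have step1 : Relation.ReflTransGen G.LegalAdjStep D E :=
          legal_of_fire_set G A D E hD hEeff (fun u => by simp only [hE]; congr!)
        -- recurse with σ' = σ - indicator of A
        set σ' : V → ℤ := fun v => σ v - (if v ∈ A then 1 else 0) with hσ'
        have hσ'pos : ∀ v, 0 ≤ σ' v := by
          intro v
          rw [hσ']; dsimp only
          by_cases hv : v ∈ A
          · have : σ v = M := hv
            simp [hv]; omega
          · simp [hv]; exact hσ v
        have hsum' : (∑ v, σ' v).toNat ≤ n := by
          have hsplit : ∑ v, σ' v = (∑ v, σ v) - ∑ v, (if v ∈ A then (1:ℤ) else 0) := by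
            rw [hσ', Finset.sum_sub_distrib]
          have hv₀A : v₀ ∈ A := by rw [hA]; exact hv₀.symm
          have hone : (1:ℤ) ≤ ∑ v, (if v ∈ A then (1:ℤ) else 0) := by
            have := Finset.single_le_sum
              (f := fun v => if v ∈ A then (1:ℤ) else 0)
              (fun v _ => by by_cases hv : v ∈ A <;> simp [hv]) (Finset.mem_univ v₀)
            simpa [hv₀A] using this
          have h0 : 0 ≤ ∑ v, σ' v := Finset.sum_nonneg (fun v _ => hσ'pos v)
          have h1 : 0 ≤ ∑ v, σ v := Finset.sum_nonneg (fun v _ => hσ v)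
          omega
        have hEq' : ∀ v, D' v = E v + ∑ w, (G.mul v w : ℤ) * (σ' w - σ' v) := by
          intro v
          rw [hE, hσ']; dsimp only
          rw [hEq v, add_assoc, ← Finset.sum_add_distrib]
          congr 1
          refine Finset.sum_congr rfl fun w _ => ?_
          ring
        exact step1.trans (ih σ' hσ'pos hsum' E D' hEeff hD' hEq')

lemma linEquiv_of_adjStep (G : Multigraph V) (hG : G.IsBananaTree)
    {D D' : V → ℤ} (h : G.LegalAdjStep D D') : G.LinEquiv D D' := by
  classical
  obtain ⟨v, w, hadj, _, _, hDD⟩ := h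
  subst hDD
  have hvw : v ≠ w := hadj.ne
  set Gd : SimpleGraph V := G.underlying \ SimpleGraph.fromEdgeSet {s(v, w)} with hGd
  have hbridge : ¬ Gd.Reachable v w := by
    have hb := (SimpleGraph.isAcyclic_iff_forall_adj_isBridge.mp hG.IsAcyclic) hadj
    exact SimpleGraph.isBridge_iff.mp hb
  set σ : V → ℤ := fun u => if Gd.Reachable v u then 1 else 0 with hσ
  refine ⟨σ, fun u => ?_⟩
  have hterm : ∀ u x, (G.mul u x : ℤ) * (σ x - σ u)
      = (if u = v ∧ x = w then -(G.mul v w : ℤ)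
          else if u = w ∧ x = v then (G.mul v w : ℤ) else 0) := by
    intro u x
    by_cases hm : G.mul u x = 0
    · have hσb : (G.mul u x : ℤ) = 0 := by exact_mod_cast hm
      split_ifs with h1 h2
      · rcases h1 with ⟨hu, hx⟩; rw [← hu, ← hx, hσb]; ring
      · rcases h2 with ⟨hu, hx⟩; rw [← hx, ← hu, G.symm x u, hσb]; ring
      · rw [hσb]; ring
    · have hmpos : 0 < G.mul u x := Nat.pos_of_ne_zero hm
      have hux : u ≠ x := by
        intro h; rw [h, G.loopless] at hm; exact hm rfl
      by_cases hs : s(u, x) = s(v, w)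
      · rw [Sym2.eq_iff] at hs
        rcases hs with ⟨hu, hx⟩ | ⟨hu, hx⟩
        · have h1 : σ u = 1 := by
            rw [hσ]; dsimp only; rw [hu]
            exact if_pos (SimpleGraph.Reachable.refl v)
          have h2 : σ x = 0 := by rw [hσ]; dsimp only; rw [hx]; exact if_neg hbridge
          rw [h1, h2, if_pos (show u = v ∧ x = w from ⟨hu, hx⟩), hu, hx]
          ring
        · have h1 : σ x = 1 := by
            rw [hσ]; dsimp only; rw [hx]
            exact if_pos (SimpleGraph.Reachable.refl v)
          have h2 : σ u = 0 := by rw [hσ]; dsimp only; rw [hu]; exact if_neg hbridge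
          have hn : ¬(u = v ∧ x = w) := fun hc => hvw (hc.1.symm.trans hu)
          rw [h1, h2, if_neg hn, if_pos (show u = w ∧ x = v from ⟨hu, hx⟩), hu, hx,
            G.symm w v]
          ring
      · have hadj' : Gd.Adj u x := by
          rw [hGd]
          simp only [SimpleGraph.sdiff_adj, SimpleGraph.fromEdgeSet_adj]
          refine ⟨hmpos, fun hc => hs hc.1⟩
        have hreach : Gd.Reachable v u ↔ Gd.Reachable v x :=
          ⟨fun hr => hr.trans hadj'.reachable, fun hr => hr.trans hadj'.symm.reachable⟩
        have hσeq : σ x = σ u := by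
          rw [hσ]; dsimp only
          by_cases hr : Gd.Reachable v u
          · rw [if_pos (hreach.mp hr), if_pos hr]
          · rw [if_neg (fun hx => hr (hreach.mpr hx)), if_neg hr]
        have hnot1 : ¬(u = v ∧ x = w) := fun ⟨h1, h2⟩ => hs (by rw [h1, h2])
        have hnot2 : ¬(u = w ∧ x = v) := fun ⟨h1, h2⟩ =>
          hs (by rw [h1, h2, Sym2.eq_swap])
        rw [hσeq, if_neg hnot1, if_neg hnot2]
        ring
  rw [Finset.sum_congr rfl fun x _ => hterm u x]
  simp only [Multigraph.adjMove]
  by_cases h1 : u = v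
  · have hneq : u ≠ w := fun hc => hvw (h1.symm.trans hc)
    have h2 : ∀ x, (if u = v ∧ x = w then -(G.mul v w : ℤ)
        else if u = w ∧ x = v then (G.mul v w : ℤ) else 0)
        = (if x = w then -(G.mul v w : ℤ) else 0) := by
      intro x
      by_cases hx : x = w
      · rw [if_pos ⟨h1, hx⟩, if_pos hx]
      · rw [if_neg (fun hc => hx hc.2), if_neg (fun hc => hneq hc.1), if_neg hx]
    rw [Finset.sum_congr rfl fun x _ => h2 x,
      Finset.sum_ite_eq' Finset.univ w (fun _ => -(G.mul v w : ℤ)), if_pos h1]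
    simp only [Finset.mem_univ, if_true]
    ring
  · by_cases h2 : u = w
    · have h3 : ∀ x, (if u = v ∧ x = w then -(G.mul v w : ℤ)
          else if u = w ∧ x = v then (G.mul v w : ℤ) else 0)
          = (if x = v then (G.mul v w : ℤ) else 0) := by
        intro x
        by_cases hx : x = v
        · rw [if_neg (fun hc => h1 hc.1), if_pos ⟨h2, hx⟩, if_pos hx]
        · rw [if_neg (fun hc => h1 hc.1), if_neg (fun hc => hx hc.2), if_neg hx]
      rw [Finset.sum_congr rfl fun x _ => h3 x,
        Finset.sum_ite_eq' Finset.univ v (fun _ => (G.mul v w : ℤ)), if_neg h1, if_pos h2]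
      simp only [Finset.mem_univ, if_true]
    · have h3 : ∀ x, (if u = v ∧ x = w then -(G.mul v w : ℤ)
          else if u = w ∧ x = v then (G.mul v w : ℤ) else 0) = 0 := by
        intro x
        rw [if_neg (fun hc => h1 hc.1), if_neg (fun hc => h2 hc.1)]
      rw [Finset.sum_congr rfl fun x _ => h3 x, if_neg h1, if_neg h2]
      simp

end BTAux

open Multigraph in
/-- On a banana tree, two effective divisors are linearly equivalent iff one
can be transformed into the other by a finite sequence of legal adjacency moves. -/
theorem linEquiv_iff_legal_adjacency_moves
    {V : Type} [Fintype V] (G : Multigraph V) (hG : G.IsBananaTree)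
    (D D' : V → ℤ) (hD : Effective D) (hD' : Effective D') :
    G.LinEquiv D D' ↔ Relation.ReflTransGen G.LegalAdjStep D D' := by
  constructor
  · rintro ⟨σ, hσeq⟩
    haveI : Nonempty V := hG.isConnected.nonempty
    set m : ℤ := Finset.univ.inf' Finset.univ_nonempty σ with hm
    set σ' : V → ℤ := fun v => σ v - m with hσ'
    refine BTAux.legal_of_nonneg_script G ((∑ v, σ' v).toNat) σ' ?_ le_rfl D D' hD hD' ?_
    · intro v
      have := Finset.inf'_le σ (Finset.mem_univ v)
      rw [hσ']; dsimp only; omega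
    · intro v
      rw [hσeq v]
      congr 1
      refine Finset.sum_congr rfl fun w _ => ?_
      rw [hσ']; ring_nf
  · intro h
    induction h with
    | refl =>
        exact ⟨fun _ => 0, fun v => by simp⟩
    | tail hbc hstep ih =>
        obtain ⟨vv, ww, hadj, hEb, hEc, heq⟩ := hstep
        obtain ⟨σ, h1⟩ := ih hEb
        obtain ⟨τ, h2⟩ := BTAux.linEquiv_of_adjStep G hG ⟨vv, ww, hadj, hEb, hEc, heq⟩
        refine ⟨fun v => σ v + τ v, fun v => ?_⟩
        rw [h2 v, h1 v, add_assoc, ← Finset.sum_add_distrib]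
        congr 1
        refine Finset.sum_congr rfl fun w _ => ?_
        ring
end
end

section
/- Let A = (a'_1, ..., a'_s) be a sequence of positive integers and n ≥ 0. Then gon(B_{A;n}) ≤ lcm(a'_1, ..., a'_s). -/
open Finset

attribute [local instance] Classical.propDecidable

noncomputable section

open Multigraph in
/-- Laplacian sum on a banana path: only the two neighbors contribute. -/
lemma bananaLap (n : ℕ) (f : ℕ → ℕ) (σ : Fin (n+1) → ℤ) (v : Fin (n+1)) :
    ∑ w, ((bananaPath n f).mul v w : ℤ) * (σ w - σ v)
    = (if h : v.val < n then (f v.val : ℤ) * (σ ⟨v.val+1, by omega⟩ - σ v) else 0)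
    + (if h : 0 < v.val then (f (v.val-1) : ℤ) * (σ ⟨v.val-1, by omega⟩ - σ v) else 0) := by
  obtain ⟨m, hm⟩ := v
  have key : ∀ w : Fin (n+1),
      ((bananaPath n f).mul ⟨m, hm⟩ w : ℤ) * (σ w - σ ⟨m, hm⟩)
      = (if h : m < n then
          (if w = (⟨m+1, by omega⟩ : Fin (n+1)) then
            (f m : ℤ) * (σ ⟨m+1, by omega⟩ - σ ⟨m, hm⟩) else 0) else 0)
      + (if h : 0 < m then
          (if w = (⟨m-1, by omega⟩ : Fin (n+1)) then
            (f (m-1) : ℤ) * (σ ⟨m-1, by omega⟩ - σ ⟨m, hm⟩) else 0) else 0) := by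
    intro w
    obtain ⟨k, hk⟩ := w
    simp only [bananaPath, Fin.mk.injEq]
    by_cases h1 : m + 1 = k
    · subst h1
      have h2 : m < n := by omega
      have h3 : ¬ (m + 1 = m - 1) := by omega
      simp [h2, h3]
    · by_cases h2 : k + 1 = m
      · have hk' : k = m - 1 := by omega
        subst hk'
        have h3 : 0 < m := by omega
        have h4 : ¬ (m + 1 = m - 1) := by omega
        have h5 : ¬ (m - 1 = m + 1) := by omega
        simp [h1, h2, h3, h4, h5]
      · have h3 : ¬ (k = m + 1) := by omega
        by_cases h4 : 0 < m
        · have h5 : ¬ (k = m - 1) := by omega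
          simp [h1, h2, h3, h4, h5]
        · simp [h1, h2, h3, h4]
  rw [Finset.sum_congr rfl (fun w _ => key w), Finset.sum_add_distrib]
  congr 1
  · by_cases h1 : m < n
    · rw [dif_pos h1]
      rw [Finset.sum_congr rfl (fun w _ => dif_pos h1)]
      rw [Finset.sum_ite_eq' Finset.univ]
      simp
    · rw [dif_neg h1]
      rw [Finset.sum_congr rfl (fun w _ => dif_neg h1)]
      simp
  · by_cases h2 : 0 < m
    · rw [dif_pos h2]
      rw [Finset.sum_congr rfl (fun w _ => dif_pos h2)]
      rw [Finset.sum_ite_eq' Finset.univ]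
      simp
    · rw [dif_neg h2]
      rw [Finset.sum_congr rfl (fun w _ => dif_neg h2)]
      simp

open Multigraph in
/-- The gonality of the `A`-monoculture banana path on `n+1` vertices is at
most `lcm(a_1, …, a_s)`. -/
theorem monoculture_gonality_le_lcm
    (s : ℕ) (hs : 0 < s) (a : ℕ → ℕ) (ha : ∀ i < s, 0 < a i) (n : ℕ) :
    (bananaPath n (fun i => a (i % s))).gonality ≤ (Finset.range s).lcm a := by
  set L := (Finset.range s).lcm a with hLdef
  have hL : 0 < L := by
    rcases Nat.eq_zero_or_pos L with h | h
    · exfalso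
      rw [hLdef, Finset.lcm_eq_zero_iff] at h
      obtain ⟨i, hi, hzero⟩ := h
      simp only [Finset.coe_range, Set.mem_Iio, Finset.mem_range] at hi
      have := ha i hi
      omega
    · exact h
  have hdvd : ∀ i : ℕ, a (i % s) ∣ L :=
    fun i => Finset.dvd_lcm (Finset.mem_range.mpr (Nat.mod_lt _ hs))
  set c : ℕ → ℕ := fun i => L / a (i % s) with hcdef
  have hmul : ∀ i : ℕ, (a (i % s)) * c i = L := fun i => Nat.mul_div_cancel' (hdvd i)
  apply Nat.sInf_le
  refine ⟨fun u => if u = (⟨0, by omega⟩ : Fin (n+1)) then (L : ℤ) else 0, ?_, ?_, ?_⟩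
  · intro u
    dsimp only
    split_ifs <;> simp
  · intro v
    obtain ⟨j, hj⟩ := v
    refine ⟨fun u => if u = (⟨j, hj⟩ : Fin (n+1)) then (L : ℤ) else 0, ?_, ?_, ?_⟩
    · -- linear equivalence
      set S : ℕ → ℤ := fun m => ∑ i ∈ Finset.range (min m j), (c i : ℤ) with hSdef
      have hS : ∀ m, S (m+1) = S m + (if m < j then (c m : ℤ) else 0) := by
        intro m
        by_cases h : m < j
        · have h1 : min (m+1) j = m + 1 := by omega
          have h2 : min m j = m := by omega
          simp only [hSdef, h1, h2, Finset.sum_range_succ, if_pos h]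
        · have h1 : min (m+1) j = j := by omega
          have h2 : min m j = j := by omega
          simp only [hSdef, h1, h2, if_neg h, add_zero]
      refine ⟨fun u => -(S u.val), ?_⟩
      intro u
      rw [bananaLap]
      obtain ⟨m, hm⟩ := u
      dsimp only
      have hLc : ∀ i : ℕ, (a (i % s) : ℤ) * (c i : ℤ) = (L : ℤ) := by
        intro i; exact_mod_cast congrArg (Nat.cast : ℕ → ℤ) (hmul i)
      have hT1 : (if h : m < n then
          ((a (m % s) : ℕ) : ℤ) * (-(S (m+1)) - -(S m)) else 0)
          = if m < n ∧ m < j then -(L : ℤ) else 0 := by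
        by_cases h1 : m < n
        · rw [dif_pos h1, hS m]
          by_cases h2 : m < j
          · rw [if_pos h2, if_pos ⟨h1, h2⟩]
            rw [show -(S m + (c m : ℤ)) - -(S m) = -(c m : ℤ) by ring]
            rw [mul_neg, hLc]
          · rw [if_neg h2, if_neg (by tauto)]
            ring
        · rw [dif_neg h1, if_neg (by tauto)]
      have hT2 : (if h : 0 < m then
          ((a ((m-1) % s) : ℕ) : ℤ) * (-(S (m-1)) - -(S m)) else 0)
          = if 0 < m ∧ m ≤ j then (L : ℤ) else 0 := by
        by_cases h1 : 0 < m
        · rw [dif_pos h1]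
          have hm1 : m - 1 + 1 = m := by omega
          have := hS (m-1)
          rw [hm1] at this
          rw [this]
          by_cases h2 : m ≤ j
          · rw [if_pos (by omega), if_pos ⟨h1, h2⟩]
            rw [show -(S (m-1)) - -(S (m-1) + (c (m-1) : ℤ)) = (c (m-1) : ℤ) by ring]
            rw [hLc]
          · rw [if_neg (by omega), if_neg (by tauto)]
            ring
        · rw [dif_neg h1, if_neg (by tauto)]
      simp only [Fin.mk.injEq]
      rw [hT1, hT2]
      have : j < n + 1 := hj
      split_ifs <;> omega
    · intro u
      dsimp only
      split_ifs <;> simp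
    · show (1:ℤ) ≤ if (⟨j, hj⟩ : Fin (n+1)) = ⟨j, hj⟩ then (L:ℤ) else 0
      rw [if_pos rfl]
      exact_mod_cast hL
  · unfold Multigraph.degree
    have : ∑ v : Fin (n+1), (if v = (⟨0, by omega⟩ : Fin (n+1)) then (L:ℤ) else 0) = (L:ℤ) := by
      rw [Finset.sum_ite_eq' Finset.univ]
      simp
    exact this
end
end

section
/- Let a_1 > a_2 > ... > a_k ≥ 1 be integers, let r_1, ..., r_k be positive integers, and let G = S_{(a_1^{r_1}, ..., a_k^{r_k})} be the corresponding banana star. Then gon(G) = min over 0 ≤ j ≤ k of ( Σ_{i=1}^{j} r_i + a_{j+1} ), where a_{k+1} is taken to be 1. -/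
open Finset

attribute [local instance] Classical.propDecidable

noncomputable section

section BananaStarHelpers

open Multigraph

variable {k : ℕ} {a r : Fin k → ℕ}

private lemma bs_mul_inl_inl (u v : Unit) :
    (bananaStar k a r).mul (Sum.inl u) (Sum.inl v) = 0 := rfl

private lemma bs_mul_inl_inr (u : Unit) (p : Σ i : Fin k, Fin (r i)) :
    (bananaStar k a r).mul (Sum.inl u) (Sum.inr p) = a p.1 := by
  rcases p with ⟨i, l⟩; rfl

private lemma bs_mul_inr_inl (u : Unit) (p : Σ i : Fin k, Fin (r i)) :
    (bananaStar k a r).mul (Sum.inr p) (Sum.inl u) = a p.1 := by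
  rcases p with ⟨i, l⟩; rfl

private lemma bs_mul_inr_inr (p q : Σ i : Fin k, Fin (r i)) :
    (bananaStar k a r).mul (Sum.inr p) (Sum.inr q) = 0 := by
  rcases p with ⟨i, l⟩; rcases q with ⟨j, m⟩; rfl

private lemma sum_V (f : (Unit ⊕ (Σ i : Fin k, Fin (r i))) → ℤ) :
    ∑ v, f v = f (Sum.inl ()) + ∑ p, f (Sum.inr p) := by
  rw [Fintype.sum_sum_type]
  simp

private lemma lap_inr (σ : (Unit ⊕ (Σ i : Fin k, Fin (r i))) → ℤ)
    (p : Σ i : Fin k, Fin (r i)) :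
    ∑ w, ((bananaStar k a r).mul (Sum.inr p) w : ℤ) * (σ w - σ (Sum.inr p))
      = (a p.1 : ℤ) * (σ (Sum.inl ()) - σ (Sum.inr p)) := by
  rw [sum_V (fun w => ((bananaStar k a r).mul (Sum.inr p) w : ℤ) * (σ w - σ (Sum.inr p)))]
  simp [bs_mul_inr_inl, bs_mul_inr_inr]

private lemma lap_inl (σ : (Unit ⊕ (Σ i : Fin k, Fin (r i))) → ℤ) :
    ∑ w, ((bananaStar k a r).mul (Sum.inl ()) w : ℤ) * (σ w - σ (Sum.inl ()))
      = ∑ p, (a p.1 : ℤ) * (σ (Sum.inr p) - σ (Sum.inl ())) := by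
  rw [sum_V (fun w => ((bananaStar k a r).mul (Sum.inl ()) w : ℤ) * (σ w - σ (Sum.inl ())))]
  simp [bs_mul_inl_inl, bs_mul_inl_inr]

private lemma linEquiv_degree {V : Type} [Fintype V] {G : Multigraph V} {D D' : V → ℤ}
    (h : G.LinEquiv D D') : Multigraph.degree D' = Multigraph.degree D := by
  obtain ⟨σ, h⟩ := h
  have key : ∑ v, ∑ w, (G.mul v w : ℤ) * σ w = ∑ v, ∑ w, (G.mul v w : ℤ) * σ v := by
    rw [Finset.sum_comm]
    refine Finset.sum_congr rfl fun v _ => Finset.sum_congr rfl fun w _ => ?_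
    rw [G.symm]
  have expand : ∀ v, ∑ w, (G.mul v w : ℤ) * (σ w - σ v)
      = (∑ w, (G.mul v w : ℤ) * σ w) - ∑ w, (G.mul v w : ℤ) * σ v := by
    intro v
    rw [← Finset.sum_sub_distrib]
    exact Finset.sum_congr rfl fun w _ => by ring
  unfold Multigraph.degree
  simp only [h, expand]
  rw [Finset.sum_add_distrib, Finset.sum_sub_distrib, key]
  ring

private lemma linEquiv_dvd {D D' : (Unit ⊕ (Σ i : Fin k, Fin (r i))) → ℤ}
    (h : (bananaStar k a r).LinEquiv D D') (p : Σ i : Fin k, Fin (r i)) :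
    (a p.1 : ℤ) ∣ D' (Sum.inr p) - D (Sum.inr p) := by
  obtain ⟨σ, h⟩ := h
  rw [h, lap_inr]
  have : D (Sum.inr p) + (a p.1 : ℤ) * (σ (Sum.inl ()) - σ (Sum.inr p)) - D (Sum.inr p)
      = (a p.1 : ℤ) * (σ (Sum.inl ()) - σ (Sum.inr p)) := by ring
  rw [this]
  exact dvd_mul_right _ _

private lemma sum_sigma_ind (j : ℕ) :
    ∑ p : (Σ i : Fin k, Fin (r i)), (if p.1.val < j then (1 : ℤ) else 0)
      = ∑ i : Fin k, (if i.val < j then (r i : ℤ) else 0) := by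
  rw [← Finset.univ_sigma_univ, Finset.sum_sigma]
  refine Finset.sum_congr rfl fun i _ => ?_
  by_cases h : i.val < j <;> simp [h, Finset.card_univ, mul_comm]


private lemma linEquiv_refl {V : Type} [Fintype V] (G : Multigraph V) (D : V → ℤ) :
    G.LinEquiv D D := ⟨fun _ => 0, fun v => by simp⟩

private lemma bs_upper (hanti : StrictAnti a) (ha : ∀ i, 1 ≤ a i) (j : ℕ) :
    ∃ D : (Unit ⊕ (Σ i : Fin k, Fin (r i))) → ℤ, Multigraph.Effective D ∧
      (Multigraph.bananaStar k a r).PosRank D ∧ Multigraph.degree D =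
        (((∑ i : Fin k, if i.val < j then r i else 0) +
          (if h : j < k then a ⟨j, h⟩ else 1) : ℕ) : ℤ) := by
  set A : ℤ := (if h : j < k then (a ⟨j, h⟩ : ℤ) else 1) with hA
  have hA1 : 1 ≤ A := by
    rw [hA]; split
    · exact_mod_cast ha _
    · exact le_refl 1
  refine ⟨Sum.elim (fun _ => A) (fun p => if p.1.val < j then 1 else 0), ?_, ?_, ?_⟩
  · intro v
    rcases v with u | p
    · simpa using le_trans zero_le_one hA1
    · simp only [Sum.elim_inr]
      split <;> norm_num
  · intro v
    rcases v with u | p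
    · refine ⟨_, linEquiv_refl _ _, ?_, ?_⟩
      · intro v
        rcases v with u | p
        · simpa using le_trans zero_le_one hA1
        · simp only [Sum.elim_inr]; split <;> norm_num
      · cases u; simpa using hA1
    · by_cases hp : p.1.val < j
      · refine ⟨_, linEquiv_refl _ _, ?_, ?_⟩
        · intro v
          rcases v with u | q
          · simpa using le_trans zero_le_one hA1
          · simp only [Sum.elim_inr]; split <;> norm_num
        · simp [hp]
      · -- leaf of type ≥ j : fire everything except this leaf
        have hjk : j < k := lt_of_le_of_lt (Nat.le_of_not_lt hp) p.1.isLt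
        have haj : (a p.1 : ℤ) ≤ A := by
          rw [hA, dif_pos hjk]
          exact_mod_cast hanti.antitone (show (⟨j, hjk⟩ : Fin k) ≤ p.1 from Nat.le_of_not_lt hp)
        set D' : (Unit ⊕ (Σ i : Fin k, Fin (r i))) → ℤ :=
          Sum.elim (fun _ => A - (a p.1 : ℤ))
            (fun q => if q = p then (a p.1 : ℤ) else if q.1.val < j then 1 else 0) with hD'
        refine ⟨D', ⟨fun u => if u = Sum.inr p then 0 else 1, ?_⟩, ?_, ?_⟩
        · intro v
          rcases v with u | q
          · cases u
            rw [lap_inl]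
            have hterm : ∀ q : Σ i : Fin k, Fin (r i),
                (a q.1 : ℤ) * ((if (Sum.inr q : Unit ⊕ (Σ i : Fin k, Fin (r i))) = Sum.inr p then (0:ℤ) else 1)
                  - (if (Sum.inl () : Unit ⊕ (Σ i : Fin k, Fin (r i))) = Sum.inr p then (0:ℤ) else 1))
                = if q = p then -(a p.1 : ℤ) else 0 := by
              intro q
              by_cases hq : q = p
              · subst hq; simp
              · have : (Sum.inr q : Unit ⊕ (Σ i : Fin k, Fin (r i))) ≠ Sum.inr p := by
                  simpa using hq
                simp [hq, this]
            simp only [hterm]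
            rw [Finset.sum_ite_eq' Finset.univ p (fun q => -(a p.1 : ℤ))]
            simp [hD']
            ring
          · rw [lap_inr]
            by_cases hq : q = p
            · subst hq
              simp [hD', hp]
            · have h1 : (Sum.inr q : Unit ⊕ (Σ i : Fin k, Fin (r i))) ≠ Sum.inr p := by
                simpa using hq
              simp [hD', hq, h1]
        · intro v
          rcases v with u | q
          · simpa [hD'] using by linarith
          · simp only [hD', Sum.elim_inr]
            split
            · positivity
            · split <;> norm_num
        · have : (1 : ℤ) ≤ (a p.1 : ℤ) := by exact_mod_cast ha p.1
          simpa [hD'] using this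
  · rw [Multigraph.degree, sum_V]
    simp only [Sum.elim_inl, Sum.elim_inr]
    rw [sum_sigma_ind j]
    push_cast
    rw [hA]
    split <;> push_cast <;> ring

private lemma bs_lower {D : (Unit ⊕ (Σ i : Fin k, Fin (r i))) → ℤ}
    (heff : Multigraph.Effective D) (hpr : (Multigraph.bananaStar k a r).PosRank D)
    (d : ℕ) (hdeg : Multigraph.degree D = (d : ℤ)) :
    (Finset.range (k + 1)).inf' Finset.nonempty_range_add_one
      (fun j => (∑ i : Fin k, if i.val < j then r i else 0) +
        (if h : j < k then a ⟨j, h⟩ else 1)) ≤ d := by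
  by_cases hz : ∃ p : Σ i : Fin k, Fin (r i), (a p.1 : ℤ) ∣ D (Sum.inr p)
  · -- some leaf divisible: take minimal such type
    obtain ⟨p0, hp0⟩ := hz
    set I : Finset (Fin k) :=
      Finset.univ.filter (fun i => ∃ l : Fin (r i), (a i : ℤ) ∣ D (Sum.inr ⟨i, l⟩)) with hI
    have hIne : I.Nonempty := ⟨p0.1, by simp [hI]; exact ⟨p0.2, hp0⟩⟩
    set istar : Fin k := I.min' hIne with histar
    have histarI : istar ∈ I := I.min'_mem hIne
    obtain ⟨lstar, hdvd⟩ : ∃ l : Fin (r istar), (a istar : ℤ) ∣ D (Sum.inr ⟨istar, l⟩) := by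
      have := histarI; rw [hI] at this; simpa using this
    have hmin : ∀ p : Σ i : Fin k, Fin (r i), p.1.val < istar.val →
        ¬ (a p.1 : ℤ) ∣ D (Sum.inr p) := by
      intro p hlt hcon
      have hpI : p.1 ∈ I := by
        rw [hI]; simp only [Finset.mem_filter, Finset.mem_univ, true_and]
        exact ⟨p.2, hcon⟩
      have := I.min'_le p.1 hpI
      rw [← histar] at this
      exact absurd (lt_of_le_of_lt this (by exact hlt)) (lt_irrefl _)
    obtain ⟨D', hequiv, heff', h1⟩ := hpr (Sum.inr ⟨istar, lstar⟩)
    have hdvd' : (a istar : ℤ) ∣ D' (Sum.inr ⟨istar, lstar⟩) := by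
      have h2 := dvd_add (linEquiv_dvd hequiv ⟨istar, lstar⟩) hdvd
      simpa using h2
    have hbig : (a istar : ℤ) ≤ D' (Sum.inr ⟨istar, lstar⟩) :=
      Int.le_of_dvd (by linarith) hdvd'
    have hpos1 : ∀ p : Σ i : Fin k, Fin (r i), p.1.val < istar.val →
        1 ≤ D' (Sum.inr p) := by
      intro p hlt
      by_contra hcon
      push_neg at hcon
      have h0 : D' (Sum.inr p) = 0 := le_antisymm (by linarith) (heff' _)
      have hd2 := linEquiv_dvd hequiv p
      rw [h0, zero_sub, dvd_neg] at hd2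
      exact hmin p hlt hd2
    have hdeg' : Multigraph.degree D' = (d : ℤ) := (linEquiv_degree hequiv).trans hdeg
    rw [Multigraph.degree, sum_V] at hdeg'
    have hsum : (∑ i : Fin k, if i.val < istar.val then (r i : ℤ) else 0) + (a istar : ℤ)
        ≤ ∑ p : Σ i : Fin k, Fin (r i), D' (Sum.inr p) := by
      have hle : ∑ p : Σ i : Fin k, Fin (r i),
          ((if p.1.val < istar.val then (1 : ℤ) else 0)
            + (if p = ⟨istar, lstar⟩ then (a istar : ℤ) else 0))
          ≤ ∑ p : Σ i : Fin k, Fin (r i), D' (Sum.inr p) := by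
        apply Finset.sum_le_sum
        intro p _
        by_cases hpp : p = ⟨istar, lstar⟩
        · subst hpp
          simpa using hbig
        · rw [if_neg hpp, add_zero]
          by_cases hlt : p.1.val < istar.val
          · rw [if_pos hlt]; exact hpos1 p hlt
          · rw [if_neg hlt]; exact heff' _
      calc (∑ i : Fin k, if i.val < istar.val then (r i : ℤ) else 0) + (a istar : ℤ)
          = ∑ p : Σ i : Fin k, Fin (r i),
            ((if p.1.val < istar.val then (1 : ℤ) else 0)
              + (if p = ⟨istar, lstar⟩ then (a istar : ℤ) else 0)) := by
            rw [Finset.sum_add_distrib, sum_sigma_ind,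
              Finset.sum_ite_eq' Finset.univ (⟨istar, lstar⟩ : Σ i : Fin k, Fin (r i))
                (fun _ => (a istar : ℤ))]
            simp
        _ ≤ _ := hle
    have hfinal : ((∑ i : Fin k, if i.val < istar.val then r i else 0) + a istar : ℤ) ≤ (d : ℤ) := by
      have hc : ((∑ i : Fin k, if i.val < istar.val then r i else 0 : ℕ) : ℤ)
          = ∑ i : Fin k, if i.val < istar.val then (r i : ℤ) else 0 := by
        push_cast [apply_ite (fun n : ℕ => (n : ℤ))]
        rfl
      have h0 : (0 : ℤ) ≤ D' (Sum.inl ()) := heff' _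
      push_cast
      linarith [hsum, hdeg', h0, hc]
    have hmem : istar.val ∈ Finset.range (k + 1) := by
      simp only [Finset.mem_range]
      exact lt_trans istar.isLt (Nat.lt_succ_self k)
    refine le_trans (Finset.inf'_le _ hmem) ?_
    have heq : (if h : istar.val < k then a ⟨istar.val, h⟩ else 1) = a istar := by
      rw [dif_pos istar.isLt]
    rw [heq]
    exact_mod_cast hfinal
  · -- no leaf divisible
    push_neg at hz
    obtain ⟨D', hequiv, heff', h1⟩ := hpr (Sum.inl ())
    have hpos1 : ∀ p : Σ i : Fin k, Fin (r i), 1 ≤ D' (Sum.inr p) := by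
      intro p
      by_contra hcon
      push_neg at hcon
      have h0 : D' (Sum.inr p) = 0 := le_antisymm (by linarith) (heff' _)
      have hd2 := linEquiv_dvd hequiv p
      rw [h0, zero_sub, dvd_neg] at hd2
      exact hz p hd2
    have hdeg' : Multigraph.degree D' = (d : ℤ) := (linEquiv_degree hequiv).trans hdeg
    rw [Multigraph.degree, sum_V] at hdeg'
    have hsum : ∑ i : Fin k, (if i.val < k then (r i : ℤ) else 0)
        ≤ ∑ p : Σ i : Fin k, Fin (r i), D' (Sum.inr p) := by
      rw [← sum_sigma_ind]
      apply Finset.sum_le_sum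
      intro p _
      rw [if_pos p.1.isLt]
      exact hpos1 p
    have hmem : k ∈ Finset.range (k + 1) := by simp
    refine le_trans (Finset.inf'_le _ hmem) ?_
    rw [dif_neg (lt_irrefl k)]
    have hc : ((∑ i : Fin k, if i.val < k then r i else 0 : ℕ) : ℤ)
        = ∑ i : Fin k, if i.val < k then (r i : ℤ) else 0 := by
      push_cast [apply_ite (fun n : ℕ => (n : ℤ))]
      rfl
    have : ((∑ i : Fin k, if i.val < k then r i else 0) + 1 : ℤ) ≤ (d : ℤ) := by
      rw [hc]; linarith
    exact_mod_cast this

end BananaStarHelpers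

open Multigraph in
/-- The gonality of the banana star `S_{(a_1^{r_1}, …, a_k^{r_k})}` (with
`a_1 > a_2 > ⋯ > a_k ≥ 1` and all `r_i ≥ 1`) equals
`min_{0 ≤ j ≤ k} ( Σ_{i=1}^{j} r_i + a_{j+1} )`, where `a_{k+1} = 1`. -/
theorem banana_star_gonality
    (k : ℕ) (a r : Fin k → ℕ) (hanti : StrictAnti a)
    (ha : ∀ i, 1 ≤ a i) (hr : ∀ i, 1 ≤ r i) :
    (Multigraph.bananaStar k a r).gonality =
      (Finset.range (k + 1)).inf' Finset.nonempty_range_add_one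
        (fun j => (∑ i : Fin k, if i.val < j then r i else 0) +
          (if h : j < k then a ⟨j, h⟩ else 1)) := by
  obtain ⟨j0, hj0mem, hj0⟩ := Finset.exists_mem_eq_inf'
    (Finset.nonempty_range_add_one (n := k))
    (fun j => (∑ i : Fin k, if i.val < j then r i else 0) +
      (if h : j < k then a ⟨j, h⟩ else 1))
  obtain ⟨D0, hD0e, hD0p, hD0d⟩ := bs_upper (r := r) hanti ha j0
  apply le_antisymm
  · rw [hj0]
    exact Nat.sInf_le ⟨D0, hD0e, hD0p, hD0d⟩
  · refine le_csInf ⟨_, D0, hD0e, hD0p, hD0d⟩ ?_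
    rintro d ⟨D, he, hp, hd⟩
    exact bs_lower he hp d hd
end
end
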